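/- For every x ≥ 0, the standard normal tail satisfies 1 − Φ(x) ≤ e^{-x²/2} / (√π (1+x)). -/

import Mathlib

open Real MeasureTheory Set Filter

noncomputable def stdNormalCDF (x : ℝ) : ℝ :=
  (Real.sqrt (2 * Real.pi))⁻¹ * ∫ t in Set.Iic x, Real.exp (-t ^ 2 / 2)

lemma f_int : Integrable (fun t : ℝ => Real.exp (-t ^ 2 / 2)) := by
  have := integrable_exp_neg_mul_sq (b := (1/2 : ℝ)) (by norm_num)
  convert this using 2 with t
  ring_nf

lemma f_cont : Continuous (fun t : ℝ => Real.exp (-t ^ 2 / 2)) := by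
  continuity

lemma total_integral : (∫ t : ℝ, Real.exp (-t ^ 2 / 2)) = Real.sqrt (2 * Real.pi) := by
  have := integral_gaussian (1/2 : ℝ)
  rw [show Real.pi / (1/2) = 2 * Real.pi by ring] at this
  rw [← this]
  congr 1 with t
  ring_nf

lemma cdf_hasDeriv (x : ℝ) :
    HasDerivAt stdNormalCDF ((Real.sqrt (2 * Real.pi))⁻¹ * Real.exp (-x ^ 2 / 2)) x := by
  have key : ∀ y : ℝ, stdNormalCDF y =
      (Real.sqrt (2 * Real.pi))⁻¹ * ((∫ t in Set.Iic 0, Real.exp (-t ^ 2 / 2))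
        + ∫ t in (0:ℝ)..y, Real.exp (-t ^ 2 / 2)) := by
    intro y
    unfold stdNormalCDF
    rw [← intervalIntegral.integral_Iic_sub_Iic (f := fun t : ℝ => Real.exp (-t ^ 2 / 2))
      f_int.integrableOn f_int.integrableOn]
    ring
  have h1 : HasDerivAt (fun y => ∫ t in (0:ℝ)..y, Real.exp (-t ^ 2 / 2))
      (Real.exp (-x ^ 2 / 2)) x :=
    intervalIntegral.integral_hasDerivAt_right f_int.intervalIntegrable
      (f_cont.stronglyMeasurableAtFilter _ _) f_cont.continuousAt
  have h2 := ((h1.const_add (∫ t in Set.Iic 0, Real.exp (-t ^ 2 / 2))).const_mul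
    ((Real.sqrt (2 * Real.pi))⁻¹))
  have h3 : HasDerivAt stdNormalCDF ((Real.sqrt (2 * Real.pi))⁻¹ * Real.exp (-x ^ 2 / 2)) x := by
    refine h2.congr_of_eventuallyEq ?_
    filter_upwards with y
    rw [key y]
  exact h3

lemma cdf_tendsto_one : Tendsto stdNormalCDF atTop (nhds 1) := by
  have h1 : Tendsto (fun y => ∫ t in (0:ℝ)..y, Real.exp (-t ^ 2 / 2)) atTop
      (nhds (∫ t in Set.Ioi 0, Real.exp (-t ^ 2 / 2))) :=
    intervalIntegral_tendsto_integral_Ioi 0 f_int.integrableOn tendsto_id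
  have key : ∀ y : ℝ, stdNormalCDF y =
      (Real.sqrt (2 * Real.pi))⁻¹ * ((∫ t in Set.Iic 0, Real.exp (-t ^ 2 / 2))
        + ∫ t in (0:ℝ)..y, Real.exp (-t ^ 2 / 2)) := by
    intro y
    unfold stdNormalCDF
    rw [← intervalIntegral.integral_Iic_sub_Iic (f := fun t : ℝ => Real.exp (-t ^ 2 / 2))
      f_int.integrableOn f_int.integrableOn]
    ring
  have hsum : (∫ t in Set.Iic 0, Real.exp (-t ^ 2 / 2))
      + (∫ t in Set.Ioi 0, Real.exp (-t ^ 2 / 2)) = Real.sqrt (2 * Real.pi) := by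
    rw [intervalIntegral.integral_Iic_add_Ioi f_int.integrableOn f_int.integrableOn,
      total_integral]
  have hpos : (0:ℝ) < Real.sqrt (2 * Real.pi) :=
    Real.sqrt_pos.2 (by positivity)
  have h2 := ((((tendsto_const_nhds (x := (∫ t in Set.Iic 0, Real.exp (-t ^ 2 / 2)))).add h1)).const_mul ((Real.sqrt (2 * Real.pi))⁻¹))
  rw [hsum, inv_mul_cancel₀ (ne_of_gt hpos)] at h2
  exact h2.congr (fun y => (key y).symm)

lemma key_ineq (x : ℝ) (hx : 0 ≤ x) :
    (Real.sqrt (2 * Real.pi))⁻¹ * Real.exp (-x ^ 2 / 2) +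
      (Real.exp (-x ^ 2 / 2) * -x * (Real.sqrt Real.pi * (1 + x)) -
        Real.exp (-x ^ 2 / 2) * Real.sqrt Real.pi) / (Real.sqrt Real.pi * (1 + x)) ^ 2 ≤ 0 := by
  have hs : (0:ℝ) < Real.sqrt Real.pi := Real.sqrt_pos.2 Real.pi_pos
  have hs2 : Real.sqrt Real.pi ^ 2 = Real.pi := Real.sq_sqrt Real.pi_pos.le
  have ht : (0:ℝ) < Real.sqrt 2 := by positivity
  have ht2 : Real.sqrt 2 ^ 2 = 2 := Real.sq_sqrt (by norm_num)
  have htle : Real.sqrt 2 ≤ 1.5 := by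
    nlinarith [Real.sq_sqrt (show (0:ℝ) ≤ 2 by norm_num), Real.sqrt_nonneg 2]
  have htge : (1:ℝ) ≤ Real.sqrt 2 := by
    nlinarith [Real.sq_sqrt (show (0:ℝ) ≤ 2 by norm_num), Real.sqrt_nonneg 2]
  have hsplit : Real.sqrt (2 * Real.pi) = Real.sqrt 2 * Real.sqrt Real.pi :=
    Real.sqrt_mul (by norm_num) _
  have hE : (0:ℝ) < Real.exp (-x ^ 2 / 2) := Real.exp_pos _
  have hu : (0:ℝ) < 1 + x := by linarith
  set s := Real.sqrt Real.pi
  set t := Real.sqrt 2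
  set E := Real.exp (-x ^ 2 / 2)
  rw [hsplit]
  have key2 : (1 + x) ^ 2 ≤ t * ((1 + x) ^ 2 - (1 + x) + 1) := by
    nlinarith [sq_nonneg (2 * (1 + x) - t - 1), sq_nonneg (1 + x - 2), sq_nonneg (t - 1.4),
      sq_nonneg (t * (1 + x) - (1 + x) - 1)]
  rw [inv_mul_eq_div,
    div_add_div _ _ (ne_of_gt (by positivity)) (ne_of_gt (by positivity)), div_nonpos_iff]
  refine Or.inr ⟨?_, by positivity⟩
  have hprod : 0 ≤ E * s ^ 2 * (t * ((1 + x) ^ 2 - (1 + x) + 1) - (1 + x) ^ 2) :=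
    mul_nonneg (by positivity) (sub_nonneg.2 key2)
  nlinarith [hprod]

theorem gaussian_tail_upper_bound (x : ℝ) (hx : 0 ≤ x) :
    1 - stdNormalCDF x ≤ Real.exp (-x ^ 2 / 2) / (Real.sqrt Real.pi * (1 + x)) := by
  have hs : (0:ℝ) < Real.sqrt Real.pi := Real.sqrt_pos.2 Real.pi_pos
  set g : ℝ → ℝ := fun y => Real.exp (-y ^ 2 / 2) / (Real.sqrt Real.pi * (1 + y)) +
    stdNormalCDF y with hg_def
  have hg : ∀ y : ℝ, 0 ≤ y → HasDerivAt g
      ((Real.sqrt (2 * Real.pi))⁻¹ * Real.exp (-y ^ 2 / 2) +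
        (Real.exp (-y ^ 2 / 2) * -y * (Real.sqrt Real.pi * (1 + y)) -
          Real.exp (-y ^ 2 / 2) * Real.sqrt Real.pi) / (Real.sqrt Real.pi * (1 + y)) ^ 2) y := by
    intro y hy
    have hd : (0:ℝ) < Real.sqrt Real.pi * (1 + y) := by positivity
    have hinner : HasDerivAt (fun z : ℝ => -z ^ 2 / 2) (-y) y := by
      have h := ((hasDerivAt_pow 2 y).neg.div_const 2)
      refine h.congr_deriv ?_
      simp
      ring
    have hnum : HasDerivAt (fun z : ℝ => Real.exp (-z ^ 2 / 2))
        (Real.exp (-y ^ 2 / 2) * -y) y := hinner.exp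
    have hden : HasDerivAt (fun z : ℝ => Real.sqrt Real.pi * (1 + z)) (Real.sqrt Real.pi) y := by
      have h := ((hasDerivAt_id y).const_add (1:ℝ)).const_mul (Real.sqrt Real.pi)
      simpa using h
    have hB := hnum.div hden (ne_of_gt hd)
    have := hB.add (cdf_hasDeriv y)
    refine this.congr_deriv ?_
    ring
  have hmono : AntitoneOn g (Set.Ici 0) := by
    apply antitoneOn_of_deriv_nonpos (convex_Ici 0)
    · exact fun y hy => ((hg y hy).continuousAt).continuousWithinAt
    · rw [interior_Ici]
      exact fun y hy => (hg y (le_of_lt hy)).differentiableAt.differentiableWithinAt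
    · rw [interior_Ici]
      intro y hy
      rw [(hg y (le_of_lt hy)).deriv]
      exact key_ineq y (le_of_lt hy)
  have hlim : Tendsto g atTop (nhds 1) := by
    have hd : Tendsto (fun y : ℝ => Real.sqrt Real.pi * (1 + y)) atTop atTop := by
      apply Tendsto.const_mul_atTop hs
      exact tendsto_atTop_add_const_left atTop 1 tendsto_id
    have hB0 : Tendsto (fun y : ℝ => Real.exp (-y ^ 2 / 2) / (Real.sqrt Real.pi * (1 + y)))
        atTop (nhds 0) := by
      apply squeeze_zero' (g := fun y : ℝ => (Real.sqrt Real.pi * (1 + y))⁻¹)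
      · filter_upwards [eventually_ge_atTop (0:ℝ)] with y hy
        positivity
      · filter_upwards [eventually_ge_atTop (0:ℝ)] with y hy
        rw [div_eq_mul_inv]
        exact mul_le_of_le_one_left (by positivity)
          (Real.exp_le_one_iff.2 (by nlinarith))
      · exact hd.inv_tendsto_atTop
    have := hB0.add cdf_tendsto_one
    simpa using this
  have h1 : 1 ≤ g x := by
    refine le_of_tendsto hlim ?_
    filter_upwards [eventually_ge_atTop x] with y hy
    exact hmono hx (le_trans hx hy) hy
  have : g x = Real.exp (-x ^ 2 / 2) / (Real.sqrt Real.pi * (1 + x)) + stdNormalCDF x := rfl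
  linarith [h1, this ▸ h1]
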